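/- The Hermitian matrix 𝔣(θ) (as defined from the diamond Toeplitz graph Laplacian, with det 𝔣(θ) = 292(1 - cos θ)) is positive semidefinite for all θ ∈ [-π,π], and positive definite for θ ≠ 0. -/

import Mathlib

open scoped ComplexOrder

open Real

/-- The matrix-valued symbol of the diamond Toeplitz graph Laplacian. -/
noncomputable def diamondSymbol (θ : ℝ) : Matrix (Fin 4) (Fin 4) ℂ :=
  !![(26 : ℂ) - 20 * (Real.cos θ : ℂ), -1, -2, -3;
     -1, 2, 0, -(Real.cos θ : ℂ) + (Real.sin θ : ℂ) * Complex.I;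
     -2, 0, 2, 0;
     -3, -(Real.cos θ : ℂ) - (Real.sin θ : ℂ) * Complex.I, 0, 4]

private lemma diamond_herm (θ : ℝ) : (diamondSymbol θ).IsHermitian := by
  rw [Matrix.IsHermitian]
  ext i j
  fin_cases i <;> fin_cases j <;>
    simp [diamondSymbol, Matrix.conjTranspose_apply, Complex.ext_iff]

private lemma diamond_form (θ : ℝ) (x : Fin 4 → ℂ) :
    dotProduct (star x) ((diamondSymbol θ).mulVec x) =
      ((Complex.normSq (x 0 - x 1) + 2 * Complex.normSq (x 0 - x 2)
        + 3 * Complex.normSq (x 0 - x 3)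
        + 10 * Complex.normSq ((1 - ((Real.cos θ : ℂ) + (Real.sin θ : ℂ) * Complex.I)) * x 0)
        + Complex.normSq (x 1 - ((Real.cos θ : ℂ) - (Real.sin θ : ℂ) * Complex.I) * x 3)
        : ℝ) : ℂ) := by
  have hcs : ((Real.cos θ : ℂ))^2 + ((Real.sin θ : ℂ))^2 = 1 := by
    exact_mod_cast congrArg (Complex.ofReal ·) (Real.cos_sq_add_sin_sq θ)
  have H : ((Real.cos θ : ℂ) + (Real.sin θ : ℂ) * Complex.I) *
      ((Real.cos θ : ℂ) - (Real.sin θ : ℂ) * Complex.I) = 1 := by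
    linear_combination hcs - ((Real.sin θ : ℂ))^2 * Complex.I_sq
  simp only [Complex.ofReal_add, Complex.ofReal_mul, Complex.ofReal_ofNat,
    Complex.normSq_eq_conj_mul_self]
  simp [diamondSymbol, Matrix.mulVec, dotProduct, Fin.sum_univ_four,
    Pi.star_apply, RCLike.star_def, map_sub, map_add, map_mul, map_one,
    Complex.conj_ofReal, Complex.conj_I, -Complex.ofReal_cos, -Complex.ofReal_sin]
  ring_nf
  linear_combination (-(10 * (starRingEnd ℂ) (x 0) * x 0) - (starRingEnd ℂ) (x 3) * x 3) * H

/-- `𝔣(θ)` is positive semidefinite for `θ ∈ [-π,π]`, and positive definite for `θ ≠ 0`. -/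
theorem diamondSymbol_posSemidef (θ : ℝ) (hθ : θ ∈ Set.Icc (-π) π) :
    (diamondSymbol θ).PosSemidef ∧ (θ ≠ 0 → (diamondSymbol θ).PosDef) := by
  constructor
  · refine Matrix.PosSemidef.of_dotProduct_mulVec_nonneg (diamond_herm θ) (fun x => ?_)
    rw [diamond_form θ x, Complex.zero_le_real]
    have n1 := Complex.normSq_nonneg (x 0 - x 1)
    have n2 := Complex.normSq_nonneg (x 0 - x 2)
    have n3 := Complex.normSq_nonneg (x 0 - x 3)
    have n4 := Complex.normSq_nonneg ((1 - ((Real.cos θ : ℂ) + (Real.sin θ : ℂ) * Complex.I)) * x 0)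
    have n5 := Complex.normSq_nonneg (x 1 - ((Real.cos θ : ℂ) - (Real.sin θ : ℂ) * Complex.I) * x 3)
    linarith
  · intro hθ0
    refine Matrix.PosDef.of_dotProduct_mulVec_pos (diamond_herm θ) (fun x hx => ?_)
    rw [diamond_form θ x, Complex.zero_lt_real]
    by_contra hle
    push_neg at hle
    have n1 := Complex.normSq_nonneg (x 0 - x 1)
    have n2 := Complex.normSq_nonneg (x 0 - x 2)
    have n3 := Complex.normSq_nonneg (x 0 - x 3)
    have n4 := Complex.normSq_nonneg ((1 - ((Real.cos θ : ℂ) + (Real.sin θ : ℂ) * Complex.I)) * x 0)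
    have n5 := Complex.normSq_nonneg (x 1 - ((Real.cos θ : ℂ) - (Real.sin θ : ℂ) * Complex.I) * x 3)
    have e1 : x 0 = x 1 := by
      have : Complex.normSq (x 0 - x 1) = 0 := by linarith
      have := Complex.normSq_eq_zero.mp this
      linear_combination this
    have e2 : x 0 = x 2 := by
      have : Complex.normSq (x 0 - x 2) = 0 := by linarith
      have := Complex.normSq_eq_zero.mp this
      linear_combination this
    have e3 : x 0 = x 3 := by
      have : Complex.normSq (x 0 - x 3) = 0 := by linarith
      have := Complex.normSq_eq_zero.mp this
      linear_combination this
    have e4 : (1 - ((Real.cos θ : ℂ) + (Real.sin θ : ℂ) * Complex.I)) * x 0 = 0 := by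
      have : Complex.normSq ((1 - ((Real.cos θ : ℂ) + (Real.sin θ : ℂ) * Complex.I)) * x 0) = 0 := by
        linarith
      exact Complex.normSq_eq_zero.mp this
    have hene : (1 : ℂ) - ((Real.cos θ : ℂ) + (Real.sin θ : ℂ) * Complex.I) ≠ 0 := by
      intro h
      have hre := congrArg Complex.re h
      simp [Complex.cos_ofReal_re, Complex.sin_ofReal_re, -Complex.ofReal_cos,
        -Complex.ofReal_sin] at hre
      have : Real.cos θ = 1 := by linarith
      have hθeq : θ = 0 := by
        have h1 : -(2 * π) < θ := by
          have := hθ.1; nlinarith [Real.pi_pos]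
        have h2 : θ < 2 * π := by
          have := hθ.2; nlinarith [Real.pi_pos]
        exact (Real.cos_eq_one_iff_of_lt_of_lt h1 h2).mp this
      exact hθ0 hθeq
    have hx0 : x 0 = 0 := by
      rcases mul_eq_zero.mp e4 with h | h
      · exact absurd h hene
      · exact h
    apply hx
    funext i
    fin_cases i <;> simp only [Pi.zero_apply] <;>
      first
        | exact hx0
        | exact e1 ▸ hx0
        | exact e2 ▸ hx0
        | exact e3 ▸ hx0
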